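/- Let G be a graph and T ⊆ G a normal tree. Then every end of G that lies in the closure of T contains exactly one normal ray of T, and sending these ends to the normal rays they contain is a bijection between the ends of G in the closure of T and the normal rays of T. -/

import Mathlib

/-! Common definitions: rays, ends (à la Halin), the end space, directions
(via Mathlib's `SimpleGraph.end`), domination, generalised paths, etc. -/

open Classical SimpleGraph

universe u

variable {V : Type u}

/-- A ray in `G`: a one-way infinite path. -/
structure Ray (G : SimpleGraph V) where
  f : ℕ → V
  inj : Function.Injective f
  adj : ∀ n, G.Adj (f n) (f (n + 1))

namespace Ray

variable {G : SimpleGraph V}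

/-- `R` has a tail inside the vertex set `S`. -/
def TailIn (R : Ray G) (S : Set V) : Prop :=
  ∃ N, ∀ n, N ≤ n → R.f n ∈ S

/-- The set of the first `n` vertices of `R`. -/
noncomputable def initSeg (R : Ray G) (n : ℕ) : Finset V :=
  (Finset.range n).image R.f

end Ray

/-- Two rays are equivalent if no finite vertex set separates them, i.e. for
every finite `X` they have tails in a common component of `G - X`. -/
def RayEquiv (G : SimpleGraph V) (R S : Ray G) : Prop :=
  ∀ X : Finset V, ∃ C : G.ComponentCompl (X : Set V), R.TailIn C ∧ S.TailIn C

/-- The ends of `G` in the sense of Halin: equivalence classes of rays. -/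
def Ends (G : SimpleGraph V) : Type u :=
  { ω : Set (Ray G) // ∃ R : Ray G, ω = { S | RayEquiv G R S } }

/-- The end of a ray. -/
def Ray.end (G : SimpleGraph V) (R : Ray G) : Ends G :=
  ⟨{ S | RayEquiv G R S }, R, rfl⟩

/-- The end `ω` lives in the component `C` of `G - X`:  every ray in `ω` has a
tail in `C`.  (For genuine ends this is the statement `C = C(X,ω)`.) -/
def LivesIn {G : SimpleGraph V} (ω : Ends G) (X : Finset V)
    (C : G.ComponentCompl (X : Set V)) : Prop :=
  ∀ R ∈ ω.1, R.TailIn C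

/-- The basic open set `Ω(X,C)` of the end space. -/
def basicSet (G : SimpleGraph V) (X : Finset V) (C : G.ComponentCompl (X : Set V)) :
    Set (Ends G) :=
  { ω | LivesIn ω X C }

/-- The end space: the topology on `Ends G` generated by the sets `Ω(X,C)`. -/
instance endsTopology (G : SimpleGraph V) : TopologicalSpace (Ends G) :=
  TopologicalSpace.generateFrom
    { U | ∃ (X : Finset V) (C : G.ComponentCompl (X : Set V)), U = basicSet G X C }

section Directions

/-- The component `f(X)` chosen by the direction `f` at the finite vertex set `X`. -/
def dirComp {G : SimpleGraph V} (f : G.end) (X : Finset V) : G.ComponentCompl (X : Set V) :=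
  f.1 (Opposite.op X)


variable (G : SimpleGraph V)

/-- The ray `R` induces the direction `f` (i.e. `f = f_ω` for the end `ω` of `R`):
for every finite `X`, the component `f(X)` contains a tail of `R`. -/
def InducesDir {G : SimpleGraph V} (R : Ray G) (f : G.end) : Prop :=
  ∀ X : Finset V, R.TailIn (dirComp f X : Set V)

/-- The end `ω` induces the direction `f`, i.e. `f = f_ω`. -/
def EndInducesDir {G : SimpleGraph V} (ω : Ends G) (f : G.end) : Prop :=
  ∀ (X : Finset V), ∀ R ∈ ω.1, R.TailIn (dirComp f X : Set V)

/-- A direction `f` is countably determined in `G` if some countable set of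
directional choices `(X, C)` distinguishes `f` from every other direction. -/
def DirCountablyDetermined {G : SimpleGraph V} (f : G.end) : Prop :=
  ∃ D : Set ((X : Finset V) × G.ComponentCompl (X : Set V)), D.Countable ∧
    ∀ h : G.end, h ≠ f → ∃ p ∈ D,
      dirComp f p.1 = p.2 ∧ dirComp h p.1 ≠ p.2

/-- `G` is countably determined: some countable set of directional choices
distinguishes every two distinct directions of `G` from each other. -/
def GraphCountablyDetermined (G : SimpleGraph V) : Prop :=
  ∃ D : Set ((X : Finset V) × G.ComponentCompl (X : Set V)), D.Countable ∧
    ∀ f h : G.end, f ≠ h → ∃ p ∈ D,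
      (dirComp f p.1 = p.2 ∧ dirComp h p.1 ≠ p.2) ∨
      (dirComp h p.1 = p.2 ∧ dirComp f p.1 ≠ p.2)

/-- `R` is directional in `G`: the directional choices given by the finite
initial segments of `R` distinguish the direction induced by `R` from every
other direction of `G`. -/
def Directional {G : SimpleGraph V} (R : Ray G) : Prop :=
  ∀ h : G.end, (∃ X : Finset V, ¬ R.TailIn (dirComp h X : Set V)) →
    ∃ n : ℕ, ¬ R.TailIn (dirComp h (R.initSeg n) : Set V)

/-- `R` is topological in `G`: the basic open sets `Ω(X_n, ω)`, for `X_n` the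
first `n` vertices of `R` and `ω` the end of `R`, form a neighbourhood base at
`ω` in the end space of `G`. -/
def Topological {G : SimpleGraph V} (R : Ray G) : Prop :=
  ∀ U : Set (Ends G), IsOpen U → R.end G ∈ U →
    ∃ (n : ℕ) (C : G.ComponentCompl (R.initSeg n : Set V)),
      LivesIn (R.end G) (R.initSeg n) C ∧ basicSet G (R.initSeg n) C ⊆ U

end Directions

section Domination

variable (G : SimpleGraph V)

/-- `v` dominates the ray `R`: no finite vertex set avoiding `v` separates `v`
from `R` (equivalently, there is an infinite `v`–`R` fan). -/
def DominatesRay (v : V) (R : Ray G) : Prop :=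
  ∀ X : Finset V, v ∉ X → ∃ (u : V) (W : G.Walk v u),
    (∃ n, R.f n = u) ∧ ∀ w ∈ W.support, w ∉ (X : Set V)

/-- `v` dominates the end `ω`. -/
def DominatesEnd (v : V) (ω : Ends G) : Prop :=
  ∀ R ∈ ω.1, DominatesRay G v R

end Domination

/-- A double ray in `G`. -/
structure DoubleRay (G : SimpleGraph V) where
  f : ℤ → V
  inj : Function.Injective f
  adj : ∀ n : ℤ, G.Adj (f n) (f (n + 1))

namespace DoubleRay

variable {G : SimpleGraph V}

/-- The positive tail of `D` lies in the end `ω`. -/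
def PosTailIn (D : DoubleRay G) (ω : Ends G) : Prop :=
  ∃ R ∈ ω.1, ∃ N : ℤ, ∀ n : ℕ, R.f n = D.f (N + n)

/-- The negative tail of `D` lies in the end `ω`. -/
def NegTailIn (D : DoubleRay G) (ω : Ends G) : Prop :=
  ∃ R ∈ ω.1, ∃ N : ℤ, ∀ n : ℕ, R.f n = D.f (N - n)

end DoubleRay

/-- `P` is (the vertex set of) a generalised path in `G` with endpoints
`ω₁ ≠ ω₂`. -/
def IsGenPath (G : SimpleGraph V) (P : Set V) (ω₁ ω₂ : Ends G) : Prop :=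
  (∃ D : DoubleRay G, P = Set.range D.f ∧
    ((D.PosTailIn ω₁ ∧ D.NegTailIn ω₂) ∨ (D.PosTailIn ω₂ ∧ D.NegTailIn ω₁))) ∨
  (∃ (u v : V) (W : G.Walk u v), W.IsPath ∧ P = { x | x ∈ W.support } ∧
    ((DominatesEnd G u ω₁ ∧ DominatesEnd G v ω₂) ∨
     (DominatesEnd G u ω₂ ∧ DominatesEnd G v ω₁))) ∨
  (∃ R : Ray G, P = Set.range R.f ∧
    ((R ∈ ω₁.1 ∧ DominatesEnd G (R.f 0) ω₂) ∨
     (R ∈ ω₂.1 ∧ DominatesEnd G (R.f 0) ω₁)))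

/-- A sun in `G` centred at `ω`: pairwise vertex-disjoint generalised paths
`(P i, {ω, leaf i})` with pairwise distinct leaves `leaf i ≠ ω`, where either
all the `P i` are double rays with one tail in `leaf i` and another in `ω`, or
all the `P i` are rays in `leaf i` whose first vertices dominate `ω`. -/
def IsSun (G : SimpleGraph V) (ω : Ends G) {I : Type*}
    (P : I → Set V) (leaf : I → Ends G) : Prop :=
  (∀ i j, i ≠ j → Disjoint (P i) (P j)) ∧ Function.Injective leaf ∧
  (∀ i, leaf i ≠ ω) ∧
  ((∀ i, ∃ D : DoubleRay G, P i = Set.range D.f ∧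
      ((D.PosTailIn (leaf i) ∧ D.NegTailIn ω) ∨
       (D.PosTailIn ω ∧ D.NegTailIn (leaf i)))) ∨
   (∀ i, ∃ R : Ray G, P i = Set.range R.f ∧ R ∈ (leaf i).1 ∧
      DominatesEnd G (R.f 0) ω))


/-- A normal tree in `G`: a rooted tree `T ⊆ G` such that the endvertices of
every `T`-path in `G` are comparable in the tree-order of `T`. -/
structure NormalTree (G : SimpleGraph V) where
  T : G.Subgraph
  root : V
  root_mem : root ∈ T.verts
  isTree : T.coe.IsTree
  normal : ∀ (u v : T.verts) (W : G.Walk u.1 v.1), W.IsPath → 0 < W.length →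
    (∀ w ∈ W.support, w ≠ u.1 → w ≠ v.1 → w ∉ T.verts) →
    (∀ P : T.coe.Walk ⟨root, root_mem⟩ v, P.IsPath → u ∈ P.support) ∨
    (∀ P : T.coe.Walk ⟨root, root_mem⟩ u, P.IsPath → v ∈ P.support)

/-- The tree-order of a normal tree: `u ≤ v` iff `u` lies on the unique path
of the tree from the root to `v`. -/
def NormalTree.Le {G : SimpleGraph V} (N : NormalTree G) (u v : N.T.verts) : Prop :=
  ∀ P : N.T.coe.Walk ⟨N.root, N.root_mem⟩ v, P.IsPath → u ∈ P.support

/-- The ray `R` lies in the subgraph `H`. -/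
def Ray.InSubgraph {G : SimpleGraph V} (R : Ray G) (H : G.Subgraph) : Prop :=
  ∀ n, H.Adj (R.f n) (R.f (n + 1))

/-- A normal ray of the normal tree `N`: a ray of the tree starting at the root. -/
def NormalTree.IsNormalRay {G : SimpleGraph V} (N : NormalTree G) (R : Ray G) : Prop :=
  R.f 0 = N.root ∧ R.InSubgraph N.T

/-- The end `ω` lies in the closure of the vertex set `M`. -/
def InClosureOf {G : SimpleGraph V} (ω : Ends G) (M : Set V) : Prop :=
  ∀ (X : Finset V) (C : G.ComponentCompl (X : Set V)), LivesIn ω X C →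
    ((C : Set V) ∩ M).Nonempty


set_option linter.unusedSectionVars false
set_option linter.unreachableTactic false
set_option linter.unusedTactic false
set_option maxHeartbeats 1000000
attribute [local instance] Classical.decEq

section WalkAux
variable {α : Type*} {G' : SimpleGraph α} [DecidableEq α]
namespace SimpleGraph.Walk

lemma takeUntil_cons_ne {a c b u : α} (r : G'.Adj a c) (q : G'.Walk c b)
    (h : u ∈ (Walk.cons r q).support) (hne : a ≠ u) (hq : u ∈ q.support) :
    (Walk.cons r q).takeUntil u h = Walk.cons r (q.takeUntil u hq) := by
  simp only [Walk.takeUntil, dif_neg hne]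

lemma dropUntil_cons_ne {a c b u : α} (r : G'.Adj a c) (q : G'.Walk c b)
    (h : u ∈ (Walk.cons r q).support) (hne : a ≠ u) (hq : u ∈ q.support) :
    (Walk.cons r q).dropUntil u h = q.dropUntil u hq := by
  simp only [Walk.dropUntil, dif_neg hne]

lemma mem_support_of_mem_cons_support {a c b u : α} {r : G'.Adj a c} {q : G'.Walk c b}
    (h : u ∈ (Walk.cons r q).support) (hne : a ≠ u) : u ∈ q.support := by
  rw [support_cons, List.mem_cons] at h
  rcases h with h | h
  · exact absurd h.symm hne
  · exact h

lemma mem_takeUntil_or {a b u w : α} (p : G'.Walk a b) (hu : u ∈ p.support) (hw : w ∈ p.support) :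
    u ∈ (p.takeUntil w hw).support ∨ w ∈ (p.takeUntil u hu).support := by
  induction p with
  | nil =>
    rw [mem_support_nil_iff] at hu
    subst hu
    exact Or.inl (Walk.start_mem_support _)
  | @cons a c b r q ih =>
    by_cases hua : a = u
    · subst hua; exact Or.inl (Walk.start_mem_support _)
    by_cases hwa : a = w
    · subst hwa; exact Or.inr (Walk.start_mem_support _)
    have hu' := mem_support_of_mem_cons_support hu hua
    have hw' := mem_support_of_mem_cons_support hw hwa
    rw [takeUntil_cons_ne r q hu hua hu', takeUntil_cons_ne r q hw hwa hw']
    rcases ih hu' hw' with h | h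
    · exact Or.inl (by simp [h])
    · exact Or.inr (by simp [h])

lemma mem_takeUntil_of_mem_dropUntil {a b u y : α} {p : G'.Walk a b} (hp : p.IsPath)
    (hu : u ∈ p.support) (hy : y ∈ (p.dropUntil u hu).support) (hy' : y ∈ p.support) :
    u ∈ (p.takeUntil y hy').support := by
  induction p with
  | nil =>
    rw [mem_support_nil_iff] at hu
    subst hu
    exact Walk.start_mem_support _
  | @cons a c b r q ih =>
    by_cases hua : a = u
    · subst hua; exact Walk.start_mem_support _
    have hu' := mem_support_of_mem_cons_support hu hua
    rw [dropUntil_cons_ne r q hu hua hu'] at hy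
    have hyq : y ∈ q.support := support_dropUntil_subset _ _ hy
    have hya : a ≠ y := by
      rintro rfl
      exact ((Walk.cons_isPath_iff r q).mp hp).2 hyq
    rw [takeUntil_cons_ne r q hy' hya hyq]
    simp only [support_cons, List.mem_cons]
    exact Or.inr (ih hp.of_cons hu' hy hyq)

lemma eq_of_mem_takeUntil_mem_dropUntil {a b u x : α} {p : G'.Walk a b} (hp : p.IsPath)
    (h : u ∈ p.support) (hx1 : x ∈ (p.takeUntil u h).support)
    (hx2 : x ∈ (p.dropUntil u h).support) : x = u := by
  by_contra hxu
  have hsplit := p.take_spec h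
  have hnd : ((p.takeUntil u h).support ++ (p.dropUntil u h).support.tail).Nodup := by
    rw [← support_append, hsplit]
    exact hp.support_nodup
  have hx2' : x ∈ (p.dropUntil u h).support.tail := by
    have := (p.dropUntil u h).support_eq_cons
    rw [this, List.mem_cons] at hx2
    rcases hx2 with h' | h'
    · exact absurd h' hxu
    · exact h'
  exact (List.disjoint_of_nodup_append hnd) hx1 hx2' 

lemma pos_length_of_ne {a b : α} (p : G'.Walk a b) (h : a ≠ b) : 0 < p.length := by
  rcases Nat.eq_zero_or_pos p.length with h0 | h0
  · exact absurd (Walk.eq_of_length_eq_zero h0) h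
  · exact h0

end SimpleGraph.Walk

variable {V : Type u}


end WalkAux

namespace NormalTree

variable {G : SimpleGraph V} (N : NormalTree G)

def rt : N.T.verts := ⟨N.root, N.root_mem⟩

noncomputable def pathTo (v : N.T.verts) : N.T.coe.Walk N.rt v :=
  (((isTree_iff_existsUnique_path).mp N.isTree).2 N.rt v).choose

lemma pathTo_isPath (v : N.T.verts) : (N.pathTo v).IsPath :=
  (((isTree_iff_existsUnique_path).mp N.isTree).2 N.rt v).choose_spec.1

lemma path_unique {v : N.T.verts} (p : N.T.coe.Walk N.rt v) (hp : p.IsPath) : p = N.pathTo v :=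
  (((isTree_iff_existsUnique_path).mp N.isTree).2 N.rt v).choose_spec.2 p hp

lemma le_iff {u v : N.T.verts} : N.Le u v ↔ u ∈ (N.pathTo v).support := by
  constructor
  · exact fun h => h (N.pathTo v) (N.pathTo_isPath v)
  · intro h P hP
    rwa [N.path_unique P hP]

lemma pathTo_takeUntil {u v : N.T.verts} (h : u ∈ (N.pathTo v).support) :
    (N.pathTo v).takeUntil u h = N.pathTo u :=
  N.path_unique _ ((N.pathTo_isPath v).takeUntil h)

lemma le_refl (v : N.T.verts) : N.Le v v := N.le_iff.mpr (Walk.end_mem_support _)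

lemma root_le (v : N.T.verts) : N.Le N.rt v := N.le_iff.mpr (Walk.start_mem_support _)

lemma le_trans {u v w : N.T.verts} (h1 : N.Le u v) (h2 : N.Le v w) : N.Le u w := by
  rw [le_iff] at h1 h2 ⊢
  have := N.pathTo_takeUntil h2
  have hsub := Walk.support_takeUntil_subset (N.pathTo w) h2
  exact hsub (this ▸ h1)

lemma pathTo_append (h : N.Le u v) :
    N.pathTo v = (N.pathTo u).append ((N.pathTo v).dropUntil u (N.le_iff.mp h)) := by
  conv_lhs => rw [← (N.pathTo v).take_spec (N.le_iff.mp h)]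
  rw [N.pathTo_takeUntil]

lemma length_le_of_le {u v : N.T.verts} (h : N.Le u v) :
    (N.pathTo u).length ≤ (N.pathTo v).length := by
  conv_rhs => rw [N.pathTo_append h]
  rw [Walk.length_append]
  omega

lemma le_antisymm {u v : N.T.verts} (h1 : N.Le u v) (h2 : N.Le v u) : u = v := by
  have e1 := N.pathTo_append h1
  have hl1 := N.length_le_of_le h1
  have hl2 := N.length_le_of_le h2
  have : ((N.pathTo v).dropUntil u (N.le_iff.mp h1)).length = 0 := by
    have := congrArg Walk.length e1
    rw [Walk.length_append] at this
    omega
  exact Walk.eq_of_length_eq_zero this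

lemma le_total_of_le {u w v : N.T.verts} (h1 : N.Le u v) (h2 : N.Le w v) :
    N.Le u w ∨ N.Le w u := by
  rw [le_iff] at h1 h2
  rcases Walk.mem_takeUntil_or (N.pathTo v) h1 h2 with h | h
  · rw [N.pathTo_takeUntil h2] at h
    exact Or.inl (N.le_iff.mpr h)
  · rw [N.pathTo_takeUntil h1] at h
    exact Or.inr (N.le_iff.mpr h)

lemma le_of_mem_dropUntil {u v y : N.T.verts} (h : u ∈ (N.pathTo v).support)
    (hy : y ∈ ((N.pathTo v).dropUntil u h).support) : N.Le u y := by
  have hy' : y ∈ (N.pathTo v).support := Walk.support_dropUntil_subset _ _ hy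
  have := Walk.mem_takeUntil_of_mem_dropUntil (N.pathTo_isPath v) h hy hy'
  rw [N.pathTo_takeUntil hy'] at this
  exact N.le_iff.mpr this

/-- The finite down-closure of `v` as a `Finset V`. -/
noncomputable def dset (v : N.T.verts) : Finset V :=
  ((N.pathTo v).support.map Subtype.val).toFinset

lemma mem_dset {x : V} {v : N.T.verts} :
    x ∈ N.dset v ↔ ∃ h : x ∈ N.T.verts, N.Le ⟨x, h⟩ v := by
  simp only [dset, List.mem_toFinset, List.mem_map]
  constructor
  · rintro ⟨s, hs, rfl⟩
    exact ⟨s.2, N.le_iff.mpr (by simpa using hs)⟩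
  · rintro ⟨h, hle⟩
    exact ⟨⟨x, h⟩, N.le_iff.mp hle, rfl⟩

lemma mem_dset_of_le {u v : N.T.verts} (h : N.Le u v) : u.1 ∈ N.dset v :=
  N.mem_dset.mpr ⟨u.2, h⟩

end NormalTree

namespace NormalTree
variable {G : SimpleGraph V} (N : NormalTree G)

lemma chain_transfer (S : Set V) (P : N.T.verts → Prop)
    (hP : ∀ s t : N.T.verts, (N.Le s t ∨ N.Le t s) → s.1 ∈ S → t.1 ∈ S → (P s ↔ P t)) :
    ∀ (n : ℕ) (a b : N.T.verts) (W : G.Walk a.1 b.1), W.length ≤ n →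
      (∀ x ∈ W.support, x ∈ S) → (P a ↔ P b) := by
  intro n
  induction n with
  | zero =>
    intro a b W hlen hS
    have : a.1 = b.1 := Walk.eq_of_length_eq_zero (Nat.le_zero.mp hlen)
    cases Subtype.ext this
    rfl
  | succ n ih =>
    intro a b W hlen hS
    by_cases hab : a = b
    · subst hab; rfl
    have hab1 : a.1 ≠ b.1 := fun h => hab (Subtype.ext h)
    set W' := W.bypass with hW'
    have hS' : ∀ x ∈ W'.support, x ∈ S := fun x hx => hS x (W.support_bypass_subset hx)
    have hlen' : W'.length ≤ n + 1 := Nat.le_trans (W.length_bypass_le) hlen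
    by_cases hint : ∃ x ∈ W'.support, x ≠ a.1 ∧ x ≠ b.1 ∧ x ∈ N.T.verts
    · obtain ⟨x, hxsup, hxa, hxb, hxT⟩ := hint
      have hsplitlen : (W'.takeUntil x hxsup).length + (W'.dropUntil x hxsup).length
          = W'.length := by
        rw [← Walk.length_append]
        exact congrArg Walk.length (W'.take_spec hxsup)
      have l1 : 0 < (W'.takeUntil x hxsup).length :=
        Walk.pos_length_of_ne _ (Ne.symm hxa)
      have l2 : 0 < (W'.dropUntil x hxsup).length :=
        Walk.pos_length_of_ne _ hxb
      have i1 := ih a ⟨x, hxT⟩ (W'.takeUntil x hxsup) (by omega)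
        (fun y hy => hS' y (Walk.support_takeUntil_subset _ _ hy))
      have i2 := ih ⟨x, hxT⟩ b (W'.dropUntil x hxsup) (by omega)
        (fun y hy => hS' y (Walk.support_dropUntil_subset _ _ hy))
      exact i1.trans i2
    · push_neg at hint
      have hpos : 0 < W'.length := Walk.pos_length_of_ne _ hab1
      have hnorm := N.normal a b W' W.bypass_isPath hpos
        (fun w hw hwa hwb => hint w hw hwa hwb)
      exact hP a b hnorm (hS a.1 W.start_mem_support) (hS b.1 W.end_mem_support)

lemma key (S : Set V) (w : N.T.verts)
    (H1 : ∀ s : N.T.verts, s.1 ∈ S → N.Le s w → s = w)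
    {a b : N.T.verts} (W : G.Walk a.1 b.1) (hS : ∀ x ∈ W.support, x ∈ S) :
    N.Le w a ↔ N.Le w b := by
  refine N.chain_transfer S (fun t => N.Le w t) ?_ W.length a b W le_rfl hS
  intro s t hcomp hs ht
  have main : ∀ s t : N.T.verts, N.Le s t → s.1 ∈ S → t.1 ∈ S → N.Le w s → N.Le w t :=
    fun s t hst _ _ hws => N.le_trans hws hst
  have main2 : ∀ s t : N.T.verts, N.Le t s → s.1 ∈ S → t.1 ∈ S → N.Le w s → N.Le w t := by
    intro s t hts hs ht hws
    rcases N.le_total_of_le hws hts with h | h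
    · exact h
    · cases H1 t ht h
      exact N.le_refl _
  rcases hcomp with h | h
  · exact ⟨fun hws => main s t h hs ht hws, fun hwt => main2 t s h ht hs hwt⟩
  · exact ⟨fun hws => main2 s t h hs ht hws, fun hwt => main t s h ht hs hwt⟩

section Succ
variable {v t₀ : N.T.verts}

noncomputable def succAux (hle : N.Le v t₀) : N.T.verts :=
  ((N.pathTo t₀).dropUntil v (N.le_iff.mp hle)).getVert 1

lemma succAux_adj (hle : N.Le v t₀) (hne : v ≠ t₀) : N.T.coe.Adj v (N.succAux hle) := by
  have hpos : 0 < ((N.pathTo t₀).dropUntil v (N.le_iff.mp hle)).length :=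
    Walk.pos_length_of_ne _ hne
  have := Walk.adj_getVert_succ _ hpos
  rwa [Walk.getVert_zero] at this

lemma succAux_mem_dropUntil (hle : N.Le v t₀) (hne : v ≠ t₀) :
    N.succAux hle ∈ ((N.pathTo t₀).dropUntil v (N.le_iff.mp hle)).support := by
  have hpos : 0 < ((N.pathTo t₀).dropUntil v (N.le_iff.mp hle)).length :=
    Walk.pos_length_of_ne _ hne
  exact Walk.mem_support_iff_exists_getVert.mpr ⟨1, rfl, hpos⟩

lemma le_succAux (hle : N.Le v t₀) (hne : v ≠ t₀) : N.Le v (N.succAux hle) :=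
  N.le_of_mem_dropUntil _ (N.succAux_mem_dropUntil hle hne)

lemma succAux_le (hle : N.Le v t₀) (hne : v ≠ t₀) : N.Le (N.succAux hle) t₀ :=
  N.le_iff.mpr (Walk.support_dropUntil_subset _ _ (N.succAux_mem_dropUntil hle hne))

lemma succAux_not_le (hle : N.Le v t₀) (hne : v ≠ t₀) : ¬ N.Le (N.succAux hle) v := by
  intro hcon
  have h1 : N.succAux hle ∈ ((N.pathTo t₀).takeUntil v (N.le_iff.mp hle)).support := by
    rw [N.pathTo_takeUntil (N.le_iff.mp hle)]
    exact N.le_iff.mp hcon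
  have := Walk.eq_of_mem_takeUntil_mem_dropUntil (N.pathTo_isPath t₀) (N.le_iff.mp hle)
    h1 (N.succAux_mem_dropUntil hle hne)
  exact (N.succAux_adj hle hne).ne' this

lemma pathTo_succAux (hle : N.Le v t₀) (hne : v ≠ t₀) :
    N.pathTo (N.succAux hle) = (N.pathTo v).concat (N.succAux_adj hle hne) := by
  refine (N.path_unique _ ?_).symm
  rw [Walk.isPath_def, Walk.support_concat, List.nodup_append']
  refine ⟨(N.pathTo_isPath v).support_nodup, List.nodup_singleton _, ?_⟩
  intro y hy hy'
  rw [List.mem_singleton] at hy'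
  subst hy'
  exact N.succAux_not_le hle hne (N.le_iff.mpr hy)

lemma le_succAux_cases (hle : N.Le v t₀) (hne : v ≠ t₀) {s : N.T.verts} (h : N.Le s (N.succAux hle)) :
    s = N.succAux hle ∨ N.Le s v := by
  have := N.le_iff.mp h
  rw [N.pathTo_succAux hle hne, Walk.support_concat,
    List.mem_append, List.mem_singleton] at this
  rcases this with h' | h'
  · exact Or.inr (N.le_iff.mpr h')
  · exact Or.inl h'

end Succ
end NormalTree

section Components
variable {G : SimpleGraph V} {K : Set V}

lemma mem_componentCompl_of_walk {c d : V} {C : G.ComponentCompl K} (hc : c ∈ C)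
    (W : G.Walk c d) (hW : ∀ x ∈ W.support, x ∉ K) : d ∈ C := by
  induction W with
  | nil => exact hc
  | @cons a e b r q ih =>
    refine ih ?_ (fun x hx => hW x (by rw [Walk.support_cons]; exact List.mem_cons_of_mem _ hx))
    exact SimpleGraph.ComponentCompl.mem_of_adj a e hc
      (hW e (by rw [Walk.support_cons]; exact List.mem_cons_of_mem _ q.start_mem_support)) r

lemma componentCompl_eq_of_common {x : V} {C D : G.ComponentCompl K}
    (hC : x ∈ C) (hD : x ∈ D) : C = D := by
  obtain ⟨h1, e1⟩ := hC
  obtain ⟨h2, e2⟩ := hD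
  rw [← e1, ← e2]

/-- From membership in a component, a walk within the component to any other member. -/
lemma exists_walk_in_componentCompl {c d : V} {C : G.ComponentCompl K}
    (hc : c ∈ C) (hd : d ∈ C) : ∃ W : G.Walk c d, ∀ x ∈ W.support, x ∉ K := by
  obtain ⟨h1, e1⟩ := hc
  obtain ⟨h2, e2⟩ := hd
  have : G.componentComplMk h1 = G.componentComplMk h2 := by rw [e1, e2]
  have hreach := (SimpleGraph.ConnectedComponent.eq).mp this
  obtain ⟨p⟩ := hreach
  let hom : (G.induce Kᶜ) →g G :=
    ⟨Subtype.val, fun {a b} h => h⟩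
  refine ⟨(p.map hom).copy rfl rfl, ?_⟩
  intro x hx
  rw [Walk.support_copy, Walk.support_map] at hx
  obtain ⟨y, _, rfl⟩ := List.mem_map.mp hx
  exact y.2

end Components

section Rays
variable {G : SimpleGraph V}

lemma ray_tail_comp (R : Ray G) (X : Finset V) :
    ∃ C : G.ComponentCompl (X : Set V), R.TailIn C := by
  have hfin : {n : ℕ | R.f n ∈ (X : Set V)}.Finite :=
    Set.Finite.preimage (Set.injOn_of_injective R.inj) X.finite_toSet
  obtain ⟨M, hM⟩ := hfin.bddAbove
  have hnot : ∀ n, M + 1 ≤ n → R.f n ∉ (X : Set V) := by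
    intro n hn hmem
    have := hM hmem
    omega
  refine ⟨G.componentComplMk (hnot (M+1) le_rfl), ⟨M+1, ?_⟩⟩
  intro n hn
  induction n with
  | zero => omega
  | succ m ih =>
    rcases Nat.lt_or_ge (m+1) (M+2) with h | h
    · have : m + 1 = M + 1 := by omega
      rw [this]
      exact G.componentComplMk_mem _
    · have hm : M + 1 ≤ m := by omega
      exact SimpleGraph.ComponentCompl.mem_of_adj _ _ (ih hm) (hnot (m+1) (by omega)) (R.adj m)

lemma tailIn_unique {R : Ray G} {X : Finset V} {C D : G.ComponentCompl (X : Set V)}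
    (hC : R.TailIn C) (hD : R.TailIn D) : C = D := by
  obtain ⟨n1, h1⟩ := hC
  obtain ⟨n2, h2⟩ := hD
  exact componentCompl_eq_of_common (h1 (max n1 n2) (le_max_left _ _))
    (h2 (max n1 n2) (le_max_right _ _))

lemma rayEquiv_refl (R : Ray G) : RayEquiv G R R := by
  intro X
  obtain ⟨C, hC⟩ := ray_tail_comp R X
  exact ⟨C, hC, hC⟩

lemma rayEquiv_symm {R S : Ray G} (h : RayEquiv G R S) : RayEquiv G S R := by
  intro X
  obtain ⟨C, h1, h2⟩ := h X
  exact ⟨C, h2, h1⟩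

lemma rayEquiv_trans {R S T : Ray G} (h1 : RayEquiv G R S) (h2 : RayEquiv G S T) :
    RayEquiv G R T := by
  intro X
  obtain ⟨C, hC1, hC2⟩ := h1 X
  obtain ⟨D, hD1, hD2⟩ := h2 X
  exact ⟨C, hC1, (tailIn_unique hD1 hC2) ▸ hD2⟩

lemma mem_end_iff {ω : Ends G} {R₀ : Ray G} (h : ω.1 = {S | RayEquiv G R₀ S}) (S : Ray G) :
    S ∈ ω.1 ↔ RayEquiv G R₀ S := by rw [h]; rfl

end Rays



section NormalRays
variable {G : SimpleGraph V} (N : NormalTree G)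

lemma ray_ext {R S : Ray G} (h : R.f = S.f) : R = S := by
  cases R; cases S; simp_all

namespace NormalTree

variable {R : Ray G}

def nrVert (hR : N.IsNormalRay R) (n : ℕ) : N.T.verts :=
  ⟨R.f n, (hR.2 n).fst_mem⟩

lemma nrVert_adj (hR : N.IsNormalRay R) (n : ℕ) :
    N.T.coe.Adj (N.nrVert hR n) (N.nrVert hR (n+1)) := hR.2 n

lemma nrVert_zero (hR : N.IsNormalRay R) : N.nrVert hR 0 = N.rt :=
  Subtype.ext hR.1

noncomputable def prefixWalk (hR : N.IsNormalRay R) :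
    (n : ℕ) → N.T.coe.Walk (N.nrVert hR 0) (N.nrVert hR n)
  | 0 => Walk.nil
  | n+1 => (prefixWalk hR n).concat (N.nrVert_adj hR n)

lemma support_prefixWalk (hR : N.IsNormalRay R) (n : ℕ) :
    (N.prefixWalk hR n).support = (List.range (n+1)).map (N.nrVert hR) := by
  induction n with
  | zero => rw [show List.range 1 = [0] from rfl]; simp [prefixWalk]
  | succ n ih =>
    rw [prefixWalk, Walk.support_concat, ih, List.range_succ (n := n+1), List.map_append]
    simp

lemma length_prefixWalk (hR : N.IsNormalRay R) (n : ℕ) :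
    (N.prefixWalk hR n).length = n := by
  induction n with
  | zero => rfl
  | succ n ih => rw [prefixWalk, Walk.length_concat, ih]

lemma isPath_prefixWalk (hR : N.IsNormalRay R) (n : ℕ) :
    (N.prefixWalk hR n).IsPath := by
  rw [Walk.isPath_def, N.support_prefixWalk hR n]
  refine List.Nodup.map ?_ List.nodup_range
  intro i j hij
  exact R.inj (congrArg Subtype.val hij)

lemma pathTo_nrVert (hR : N.IsNormalRay R) (n : ℕ) :
    N.pathTo (N.nrVert hR n) = (N.prefixWalk hR n).copy (N.nrVert_zero hR) rfl := by
  refine (N.path_unique _ ?_).symm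
  rw [Walk.isPath_copy]
  exact N.isPath_prefixWalk hR n

lemma le_nrVert_iff (hR : N.IsNormalRay R) {s : N.T.verts} {n : ℕ} :
    N.Le s (N.nrVert hR n) ↔ ∃ i, i ≤ n ∧ s = N.nrVert hR i := by
  rw [le_iff, N.pathTo_nrVert hR n, Walk.support_copy, N.support_prefixWalk hR n]
  simp only [List.mem_map, List.mem_range]
  constructor
  · rintro ⟨i, hi, rfl⟩
    exact ⟨i, by omega, rfl⟩
  · rintro ⟨i, hi, rfl⟩
    exact ⟨i, by omega, rfl⟩

lemma nrVert_le (hR : N.IsNormalRay R) {i n : ℕ} (h : i ≤ n) :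
    N.Le (N.nrVert hR i) (N.nrVert hR n) :=
  (N.le_nrVert_iff hR).mpr ⟨i, h, rfl⟩

lemma length_pathTo_nrVert (hR : N.IsNormalRay R) (n : ℕ) :
    (N.pathTo (N.nrVert hR n)).length = n := by
  rw [N.pathTo_nrVert hR n, Walk.length_copy, N.length_prefixWalk hR n]

/-- Part 3: distinct normal rays are not equivalent. -/
lemma normal_ray_unique {R S : Ray G} (hR : N.IsNormalRay R) (hS : N.IsNormalRay S)
    (heq : RayEquiv G R S) : R = S := by
  by_contra hne
  have hdiff : ∃ n, R.f n ≠ S.f n := by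
    by_contra h
    push_neg at h
    exact hne (ray_ext (funext h))
  classical
  let k := Nat.find hdiff
  have hk : R.f k ≠ S.f k := Nat.find_spec hdiff
  have hmin : ∀ i, i < k → R.f i = S.f i := fun i hi => by
    have := Nat.find_min hdiff hi
    push_neg at this
    exact this
  have hk0 : k ≠ 0 := by
    intro h
    apply hk
    rw [h, hR.1, hS.1]
  set X : Finset V := (Finset.range k).image R.f with hX
  have hmemX : ∀ x, x ∈ X ↔ ∃ i, i < k ∧ R.f i = x := by
    intro x
    simp only [hX, Finset.mem_image, Finset.mem_range]
  set w : N.T.verts := N.nrVert hR k with hw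
  have H1 : ∀ s : N.T.verts, s.1 ∈ {x | x ∉ (X : Set V)} → N.Le s w → s = w := by
    intro s hs hsw
    obtain ⟨i, hik, rfl⟩ := (N.le_nrVert_iff hR).mp hsw
    rcases Nat.lt_or_ge i k with h | h
    · exact absurd ((hmemX _).mpr ⟨i, h, rfl⟩) hs
    · have hik' : i = k := by omega
      subst hik'
      rfl
  obtain ⟨C, hCR, hCS⟩ := heq X
  obtain ⟨NR, hNR⟩ := hCR
  obtain ⟨NS, hNS⟩ := hCS
  set a := max NR k with ha
  set b := max NS k with hb
  have haC : R.f a ∈ C := hNR a (le_max_left _ _)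
  have hbC : S.f b ∈ C := hNS b (le_max_left _ _)
  obtain ⟨W, hWsupp⟩ := exists_walk_in_componentCompl haC hbC
  have hkey := N.key {x | x ∉ (X : Set V)} w H1 (a := N.nrVert hR a) (b := N.nrVert hS b)
    W (fun x hx => hWsupp x hx)
  have hwa : N.Le w (N.nrVert hR a) := N.nrVert_le hR (le_max_right _ _)
  have hwb : N.Le w (N.nrVert hS b) := hkey.mp hwa
  obtain ⟨i, hib, hwi⟩ := (N.le_nrVert_iff hS).mp hwb
  have hki : R.f k = S.f i := congrArg Subtype.val hwi
  have hlen : k = i := by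
    have l1 := N.length_pathTo_nrVert hR k
    have l2 := N.length_pathTo_nrVert hS i
    rw [← hwi] at l2
    rw [← l1, l2]
  exact hk (by rw [hki, hlen])

end NormalTree
end NormalRays



section Construction
variable {G : SimpleGraph V} (N : NormalTree G)

noncomputable def tailComp (R₀ : Ray G) (X : Finset V) : G.ComponentCompl (X : Set V) :=
  (ray_tail_comp R₀ X).choose

lemma tailComp_spec (R₀ : Ray G) (X : Finset V) : R₀.TailIn (tailComp R₀ X) :=
  (ray_tail_comp R₀ X).choose_spec

lemma tailComp_mono (R₀ : Ray G) {X Y : Finset V} (h : X ⊆ Y) :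
    (tailComp R₀ Y : Set V) ⊆ (tailComp R₀ X : Set V) := by
  have hsub : (X : Set V) ⊆ (Y : Set V) := Finset.coe_subset.mpr h
  have h1 : R₀.TailIn ((tailComp R₀ Y).hom hsub : Set V) := by
    obtain ⟨n, hn⟩ := tailComp_spec R₀ Y
    exact ⟨n, fun m hm => (tailComp R₀ Y).subset_hom hsub (hn m hm)⟩
  have h2 : (tailComp R₀ Y).hom hsub = tailComp R₀ X := tailIn_unique h1 (tailComp_spec R₀ X)
  exact h2 ▸ (tailComp R₀ Y).subset_hom hsub

variable (R₀ : Ray G)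
  (hT : ∀ X : Finset V, ∃ t : N.T.verts, t.1 ∈ tailComp R₀ X)

def Jinv (v : N.T.verts) : Prop :=
  ∀ t : N.T.verts, t.1 ∈ tailComp R₀ (N.dset v) → N.Le v t ∧ v ≠ t

lemma Jinv_root : Jinv N R₀ N.rt := by
  intro t ht
  refine ⟨N.root_le t, ?_⟩
  rintro rfl
  exact (SimpleGraph.ComponentCompl.notMem_of_mem ht) (N.mem_dset_of_le (N.le_refl _))

lemma step (v : N.T.verts) (hJ : Jinv N R₀ v) (ht : ∃ t : N.T.verts, t.1 ∈ tailComp R₀ (N.dset v)) :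
    ∃ w : N.T.verts, N.T.coe.Adj v w ∧ N.Le v w ∧ v ≠ w ∧
      w.1 ∈ (tailComp R₀ (N.dset v) : Set V) ∧
      (∀ t : N.T.verts, t.1 ∈ (tailComp R₀ (N.dset v) : Set V) → N.Le w t) ∧
      Jinv N R₀ w := by
  obtain ⟨t₀, ht₀⟩ := ht
  obtain ⟨hvt, hvne⟩ := hJ t₀ ht₀
  set w := N.succAux hvt with hwdef
  have hadj : N.T.coe.Adj v w := N.succAux_adj hvt hvne
  have hvw : N.Le v w := N.le_succAux hvt hvne
  have hwv : ¬ N.Le w v := N.succAux_not_le hvt hvne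
  have hvnew : v ≠ w := fun h => hwv (h ▸ N.le_refl v)
  -- every vertex above w avoids dset v
  have havoid : ∀ y : N.T.verts, N.Le w y → y.1 ∉ ((N.dset v : Finset V) : Set V) := by
    intro y hwy hy
    obtain ⟨hmem, hle⟩ := N.mem_dset.mp hy
    have : N.Le y v := by
      have : (⟨y.1, hmem⟩ : N.T.verts) = y := Subtype.ext rfl
      rwa [this] at hle
    exact hwv (N.le_trans hwy this)
  -- walk from t₀ down to w inside the component
  have hwC : w.1 ∈ (tailComp R₀ (N.dset v) : Set V) := by
    have hwt₀ : w ∈ (N.pathTo t₀).support :=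
      Walk.support_dropUntil_subset _ _ (N.succAux_mem_dropUntil hvt hvne)
    have hwle : N.Le w t₀ := N.le_iff.mpr hwt₀
    set Q := (N.pathTo t₀).dropUntil w hwt₀ with hQ
    have hQs : ∀ y : N.T.verts, y ∈ Q.support → N.Le w y := fun y hy =>
      N.le_of_mem_dropUntil hwt₀ hy
    have := mem_componentCompl_of_walk (K := ((N.dset v : Finset V) : Set V)) ht₀
      ((Q.reverse).map N.T.hom) ?_
    · exact this
    · intro x hx
      replace hx : x ∈ ((Q.reverse).map N.T.hom).support := hx
      rw [Walk.support_map, Walk.support_reverse] at hx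
      obtain ⟨y, hy, rfl⟩ := List.mem_map.mp hx
      exact havoid y (hQs y (List.mem_reverse.mp hy))
  refine ⟨w, hadj, hvw, hvnew, hwC, ?_, ?_⟩
  · -- all T-vertices in the component are above w
    intro t htC
    obtain ⟨W, hW⟩ := exists_walk_in_componentCompl hwC htC
    have hkey := N.key {x | x ∉ ((N.dset v : Finset V) : Set V)} w ?_ (a := w) (b := t) W
      (fun x hx => hW x hx)
    · exact hkey.mp (N.le_refl w)
    · intro s hs hsw
      rcases N.le_succAux_cases hvt hvne hsw with h | h
      · exact h
      · exact absurd (N.mem_dset_of_le h) hs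
  · -- Jinv is preserved
    intro t htC
    have hdsub : N.dset v ⊆ N.dset w := by
      intro x hx
      obtain ⟨hmem, hle⟩ := N.mem_dset.mp hx
      exact N.mem_dset.mpr ⟨hmem, N.le_trans hle hvw⟩
    have htC' : t.1 ∈ (tailComp R₀ (N.dset v) : Set V) := tailComp_mono R₀ hdsub htC
    obtain ⟨W, hW⟩ := exists_walk_in_componentCompl hwC htC'
    have hkey := N.key {x | x ∉ ((N.dset v : Finset V) : Set V)} w ?_ (a := w) (b := t) W
      (fun x hx => hW x hx)
    · refine ⟨hkey.mp (N.le_refl w), ?_⟩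
      rintro rfl
      exact (SimpleGraph.ComponentCompl.notMem_of_mem htC) (N.mem_dset_of_le (N.le_refl _))
    · intro s hs hsw
      rcases N.le_succAux_cases hvt hvne hsw with h | h
      · exact h
      · exact absurd (N.mem_dset_of_le h) hs

end Construction



section Sequence
variable {G : SimpleGraph V} (N : NormalTree G) (R₀ : Ray G)
  (hT : ∀ X : Finset V, ∃ t : N.T.verts, t.1 ∈ tailComp R₀ X)

/-- The sequence of vertices of the constructed normal ray. -/
noncomputable def chainSeq : (n : ℕ) → {v : N.T.verts // Jinv N R₀ v}
  | 0 => ⟨N.rt, Jinv_root N R₀⟩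
  | n+1 =>
    let p := chainSeq n
    ⟨(step N R₀ p.1 p.2 (hT (N.dset p.1))).choose,
     (step N R₀ p.1 p.2 (hT (N.dset p.1))).choose_spec.2.2.2.2.2⟩

noncomputable def cv (n : ℕ) : N.T.verts := (chainSeq N R₀ hT n).1

lemma cv_spec (n : ℕ) :
    N.T.coe.Adj (cv N R₀ hT n) (cv N R₀ hT (n+1)) ∧
    N.Le (cv N R₀ hT n) (cv N R₀ hT (n+1)) ∧ cv N R₀ hT n ≠ cv N R₀ hT (n+1) ∧
    (cv N R₀ hT (n+1)).1 ∈ (tailComp R₀ (N.dset (cv N R₀ hT n)) : Set V) ∧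
    (∀ t : N.T.verts, t.1 ∈ (tailComp R₀ (N.dset (cv N R₀ hT n)) : Set V) →
      N.Le (cv N R₀ hT (n+1)) t) := by
  have h := (step N R₀ (chainSeq N R₀ hT n).1 (chainSeq N R₀ hT n).2
    (hT (N.dset (chainSeq N R₀ hT n).1))).choose_spec
  exact ⟨h.1, h.2.1, h.2.2.1, h.2.2.2.1, h.2.2.2.2.1⟩

lemma cv_mono {m n : ℕ} (h : m ≤ n) : N.Le (cv N R₀ hT m) (cv N R₀ hT n) := by
  induction n with
  | zero =>
    have : m = 0 := Nat.le_zero.mp h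
    subst this
    exact N.le_refl _
  | succ n ih =>
    rcases Nat.lt_or_ge m (n+1) with h' | h'
    · exact N.le_trans (ih (by omega)) (cv_spec N R₀ hT n).2.1
    · have : m = n + 1 := by omega
      subst this
      exact N.le_refl _

lemma cv_ne {m n : ℕ} (h : m < n) : cv N R₀ hT m ≠ cv N R₀ hT n := by
  intro heq
  have h1 : N.Le (cv N R₀ hT (m+1)) (cv N R₀ hT n) := cv_mono N R₀ hT (by omega)
  rw [← heq] at h1
  exact (cv_spec N R₀ hT m).2.2.1 (N.le_antisymm (cv_spec N R₀ hT m).2.1 h1)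

/-- The constructed normal ray. -/
noncomputable def chainRay : Ray G where
  f := fun n => (cv N R₀ hT n).1
  inj := by
    intro m n h
    by_contra hmn
    rcases Nat.lt_or_ge m n with h' | h'
    · exact cv_ne N R₀ hT h' (Subtype.ext h)
    · exact cv_ne N R₀ hT (by omega) (Subtype.ext h.symm)
  adj := fun n => ((cv_spec N R₀ hT n).1).adj_sub

lemma chainRay_isNormalRay : N.IsNormalRay (chainRay N R₀ hT) :=
  ⟨rfl, fun n => (cv_spec N R₀ hT n).1⟩

/-- The constructed ray has a tail in every `tailComp R₀ X`. -/
lemma chainRay_tail (X : Finset V) : (chainRay N R₀ hT).TailIn (tailComp R₀ X : Set V) := by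
  classical
  -- finitely many indices n with (cv n) below some vertex of X
  set U : Finset V := X.biUnion
    (fun x => if h : x ∈ N.T.verts then N.dset ⟨x, h⟩ else ∅) with hU
  have hFin : {n : ℕ | ((cv N R₀ hT n).1 : V) ∈ (U : Set V)}.Finite := by
    apply Set.Finite.preimage
    · intro a _ b _ hab
      by_contra hne
      rcases Nat.lt_or_ge a b with h' | h'
      · exact cv_ne N R₀ hT h' (Subtype.ext hab)
      · exact cv_ne N R₀ hT (by omega) (Subtype.ext hab.symm)
    · exact U.finite_toSet
  obtain ⟨p₀, hp₀⟩ := hFin.bddAbove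
  set p := p₀ + 1 with hp
  have hnoX : ∀ n, p ≤ n → ∀ t : N.T.verts, t.1 ∈ X → ¬ N.Le (cv N R₀ hT n) t := by
    intro n hn t htX hle
    have hmem : ((cv N R₀ hT n).1 : V) ∈ (U : Set V) := by
      rw [hU]
      simp only [Finset.coe_biUnion, Set.mem_iUnion, Finset.mem_coe]
      refine ⟨t.1, htX, ?_⟩
      rw [dif_pos t.2]
      have : (⟨t.1, t.2⟩ : N.T.verts) = t := Subtype.ext rfl
      rw [this]
      exact N.mem_dset_of_le hle
    have := hp₀ hmem
    omega
  refine ⟨p + 1, ?_⟩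
  intro n hn
  obtain ⟨j, rfl⟩ : ∃ j, n = j + 1 := ⟨n - 1, by omega⟩
  have hjp : p ≤ j := by omega
  set Y : Finset V := X ∪ N.dset (cv N R₀ hT j) with hY
  obtain ⟨t₀, ht₀⟩ := hT Y
  have ht₀' : t₀.1 ∈ (tailComp R₀ (N.dset (cv N R₀ hT j)) : Set V) :=
    tailComp_mono R₀ (Finset.subset_union_right) ht₀
  have hwt₀ : N.Le (cv N R₀ hT (j+1)) t₀ := (cv_spec N R₀ hT j).2.2.2.2 t₀ ht₀'
  -- walk down from t₀ to cv (j+1) avoiding Y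
  have hwsup : cv N R₀ hT (j+1) ∈ (N.pathTo t₀).support := N.le_iff.mp hwt₀
  set Q := (N.pathTo t₀).dropUntil (cv N R₀ hT (j+1)) hwsup with hQ
  have hQavoid : ∀ y : N.T.verts, y ∈ Q.support → y.1 ∉ (Y : Set V) := by
    intro y hy hmem
    have hwy : N.Le (cv N R₀ hT (j+1)) y := N.le_of_mem_dropUntil hwsup hy
    rw [hY] at hmem
    rcases Finset.mem_union.mp hmem with h | h
    · exact hnoX (j+1) (by omega) y h hwy
    · obtain ⟨hmem', hle⟩ := N.mem_dset.mp h
      have hyle : N.Le y (cv N R₀ hT j) := by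
        have : (⟨y.1, hmem'⟩ : N.T.verts) = y := Subtype.ext rfl
        rwa [this] at hle
      have : N.Le (cv N R₀ hT (j+1)) (cv N R₀ hT j) := N.le_trans hwy hyle
      exact (cv_spec N R₀ hT j).2.2.1 (N.le_antisymm (cv_spec N R₀ hT j).2.1 this)
  have hmemY : (cv N R₀ hT (j+1)).1 ∈ (tailComp R₀ Y : Set V) := by
    refine mem_componentCompl_of_walk ht₀ ((Q.reverse).map N.T.hom) ?_
    intro x hx
    replace hx : x ∈ ((Q.reverse).map N.T.hom).support := hx
    rw [Walk.support_map, Walk.support_reverse] at hx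
    obtain ⟨y, hy, rfl⟩ := List.mem_map.mp hx
    exact hQavoid y (List.mem_reverse.mp hy)
  exact tailComp_mono R₀ (Finset.subset_union_left) hmemY

end Sequence


/-- Every end of `G` in the closure of a normal tree `T ⊆ G` contains exactly
one normal ray of `T`, and the ends in the closure of `T` correspond
bijectively to the normal rays of `T`. -/
theorem stmt_10 {V : Type u} (G : SimpleGraph V) (N : NormalTree G) :
    (∀ ω : Ends G, InClosureOf ω N.T.verts →
      ∃! R : Ray G, N.IsNormalRay R ∧ R ∈ ω.1) ∧
    (∀ R : Ray G, N.IsNormalRay R → InClosureOf (R.end G) N.T.verts) ∧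
    (∀ R S : Ray G, N.IsNormalRay R → N.IsNormalRay S → RayEquiv G R S → R = S) := by
  refine ⟨?_, ?_, fun R S hR hS h => N.normal_ray_unique hR hS h⟩
  · intro ω hω
    obtain ⟨R₀, hR₀⟩ := ω.2
    have hT : ∀ X : Finset V, ∃ t : N.T.verts, t.1 ∈ (tailComp R₀ X : Set V) := by
      intro X
      have hLive : LivesIn ω X (tailComp R₀ X) := by
        intro S hS
        have hSe : RayEquiv G R₀ S := by rw [hR₀] at hS; exact hS
        obtain ⟨C, h1, h2⟩ := hSe X
        rwa [tailIn_unique h1 (tailComp_spec R₀ X)] at h2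
      obtain ⟨x, hx1, hx2⟩ := hω X (tailComp R₀ X) hLive
      exact ⟨⟨x, hx2⟩, hx1⟩
    have hmem : RayEquiv G R₀ (chainRay N R₀ hT) := fun X =>
      ⟨tailComp R₀ X, tailComp_spec R₀ X, chainRay_tail N R₀ hT X⟩
    refine ⟨chainRay N R₀ hT, ⟨chainRay_isNormalRay N R₀ hT, ?_⟩, ?_⟩
    · rw [hR₀]
      exact hmem
    · rintro R' ⟨hR'norm, hR'mem⟩
      have h1 : RayEquiv G R₀ R' := by rw [hR₀] at hR'mem; exact hR'mem
      exact N.normal_ray_unique hR'norm (chainRay_isNormalRay N R₀ hT)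
        (rayEquiv_trans (rayEquiv_symm h1) hmem)
  · intro R hR X C hLive
    have hRin : R ∈ (R.end G).1 := rayEquiv_refl R
    obtain ⟨N0, hN⟩ := hLive R hRin
    exact ⟨R.f N0, hN N0 le_rfl, (hR.2 N0).fst_mem⟩
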